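/- Let G = (V, E) be a finite simple graph, let ω ∈ ℝ^V, and for each edge e ∈ E let f_e : ℝ → ℝ be an odd function such that every fiber f_e⁻¹(y) has at most d elements. Let X = {x ∈ ℝ^V : for every v ∈ V, ω_v + Σ_{w ∈ N(v)} f_{{w,v}}(x_w − x_v) = 0} be the set of equilibria of the associated network dynamics. Then X is d-compatible with G, and for every induced forest W ⊆ V of G without isolated vertices, with l leaves and c connected components, cdim(X) ≤ |V| − |W| + l − c. -/

import Mathlib

open Set SimpleGraph



/-- `x_A` `d`-determines `x_B`. -/
def Determines {V : Type*} {F : V → Type*} (S : Set (∀ v, F v))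
    (A B : Set V) (d : ℕ) : Prop :=
  ∀ c : ∀ a : A, F a,
    ((fun x : ∀ v, F v => fun b : B => x b) ''
      {x ∈ S | ∀ a : A, x a = c a}).encard ≤ (d : ℕ∞)

/-- `S` is `d`-compatible with the graph `G`. -/
def Compatible {V : Type*} {F : V → Type*} (S : Set (∀ v, F v))
    (G : SimpleGraph V) (d : ℕ) : Prop :=
  ∀ v w, G.Adj v w →
    Determines S ((insert v (G.neighborSet v)) \ {w}) {w} d


set_option linter.unusedSectionVars false

section DetLemmas
variable {V : Type*} {F : V → Type*} {S : Set (∀ v, F v)}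

lemma det_mono {A A' B : Set V} {d : ℕ} (hAA : A ⊆ A') (h : Determines S A B d) :
    Determines S A' B d := by
  intro c
  refine le_trans (Set.encard_mono (Set.image_mono ?_)) (h fun a => c ⟨a, hAA a.2⟩)
  rintro x ⟨hxS, hx⟩
  exact ⟨hxS, fun a => hx ⟨a, hAA a.2⟩⟩

lemma det_insert {A : Set V} {w : V} {d : ℕ} (h : Determines S A {w} d) :
    Determines S A (insert w A) d := by
  intro c
  set P := {x ∈ S | ∀ a : A, x a = c a} with hP
  have hw : w ∈ (insert w A : Set V) := Set.mem_insert _ _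
  set ψ : (∀ b : (insert w A : Set V), F b) → (∀ b : ({w} : Set V), F b) :=
    fun g b => g ⟨b.1, Set.mem_insert_iff.mpr (Or.inl b.2)⟩ with hψ
  have himg : ψ '' ((fun x : ∀ v, F v => fun b : (insert w A : Set V) => x b) '' P)
      = (fun x : ∀ v, F v => fun b : ({w} : Set V) => x b) '' P := by
    rw [← Set.image_comp]
    apply Set.image_congr
    intro x _
    funext b
    rcases b with ⟨b, hb⟩
    cases hb
    rfl
  have hinj : Set.InjOn ψ ((fun x : ∀ v, F v => fun b : (insert w A : Set V) => x b) '' P) := by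
    rintro _ ⟨x, hx, rfl⟩ _ ⟨y, hy, rfl⟩ hxy
    funext b
    rcases b with ⟨b, hb⟩
    rcases hb with hb | hb
    · subst hb
      exact congrFun hxy ⟨b, rfl⟩
    · simp only
      rw [hx.2 ⟨b, hb⟩, hy.2 ⟨b, hb⟩]
  calc ((fun x : ∀ v, F v => fun b : (insert w A : Set V) => x b) '' P).encard
      = (ψ '' ((fun x : ∀ v, F v => fun b : (insert w A : Set V) => x b) '' P)).encard :=
        (hinj.encard_image).symm
    _ ≤ (d : ℕ∞) := by rw [himg]; exact h c

lemma encard_le_mul' {α β : Type*} {m : ℕ} :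
    ∀ {n : ℕ} {T : Set α} {U : Set β} {t : β → Set α},
    U.encard ≤ m → (T ⊆ ⋃ b ∈ U, t b) → (∀ b ∈ U, (t b).encard ≤ n) →
    T.encard ≤ ((m * n : ℕ) : ℕ∞) := by
  induction m with
  | zero =>
    intro n T U t hU hT ht
    have : U = ∅ := by
      rw [← Set.encard_eq_zero]
      simpa using le_antisymm hU zero_le
    subst this
    simp only [Set.mem_empty_iff_false, Set.iUnion_of_empty, Set.iUnion_empty,
      Set.subset_empty_iff] at hT
    simp [hT]
  | succ m ih =>
    intro n T U t hU hT ht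
    rcases U.eq_empty_or_nonempty with rfl | ⟨b₀, hb₀⟩
    · simp only [Set.mem_empty_iff_false, Set.iUnion_of_empty, Set.iUnion_empty,
        Set.subset_empty_iff] at hT
      simp [hT]
    · have h1 : (T \ t b₀).encard ≤ ((m * n : ℕ) : ℕ∞) := by
        refine ih (U := U \ {b₀}) (t := t) ?_ ?_ ?_
        · have := Set.encard_diff_singleton_add_one hb₀ (s := U)
          have h2 : (U \ {b₀}).encard + 1 ≤ (m : ℕ∞) + 1 := by
            rw [this]; exact_mod_cast hU
          exact (ENat.add_le_add_iff_right (by simp)).mp h2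
        · rintro x ⟨hxT, hxb⟩
          obtain ⟨b, hbU, hxtb⟩ := Set.mem_iUnion₂.mp (hT hxT)
          refine Set.mem_iUnion₂.mpr ⟨b, ⟨hbU, ?_⟩, hxtb⟩
          rintro rfl; exact hxb hxtb
        · exact fun b hb => ht b hb.1
      have h2 : (T ∩ t b₀).encard ≤ (n : ℕ∞) :=
        le_trans (Set.encard_mono Set.inter_subset_right) (ht b₀ hb₀)
      have h3 : T ⊆ (T \ t b₀) ∪ (T ∩ t b₀) := by
        intro x hx
        by_cases hxb : x ∈ t b₀
        · exact Or.inr ⟨hx, hxb⟩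
        · exact Or.inl ⟨hx, hxb⟩
      calc T.encard ≤ ((T \ t b₀) ∪ (T ∩ t b₀)).encard := Set.encard_mono h3
        _ ≤ (T \ t b₀).encard + (T ∩ t b₀).encard := Set.encard_union_le _ _
        _ ≤ ((m * n : ℕ) : ℕ∞) + (n : ℕ∞) := add_le_add h1 h2
        _ = (((m + 1) * n : ℕ) : ℕ∞) := by
            rw [← Nat.cast_add]; congr 1; ring

lemma det_trans {A B C : Set V} {d₁ d₂ : ℕ} (h₁ : Determines S A B d₁)
    (h₂ : Determines S B C d₂) : Determines S A C (d₁ * d₂) := by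
  intro c
  refine encard_le_mul' (U := (fun x : ∀ v, F v => fun b : B => x b) ''
      {x ∈ S | ∀ a : A, x a = c a})
    (t := fun b => (fun x : ∀ v, F v => fun cc : C => x cc) '' {x ∈ S | ∀ bb : B, x bb = b bb})
    (h₁ c) ?_ ?_
  · rintro _ ⟨x, hx, rfl⟩
    refine Set.mem_iUnion₂.mpr ⟨(fun b : B => x b), ⟨x, hx, rfl⟩, ⟨x, ⟨hx.1, fun bb => rfl⟩, rfl⟩⟩
  · rintro b _
    exact h₂ b

end DetLemmas


section GraphAux
variable {V : Type*} [Fintype V] [DecidableEq V] (G : SimpleGraph V)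

lemma induce_acyclic_mono {W' W : Set V} (h : W' ⊆ W) (hac : (G.induce W).IsAcyclic) :
    (G.induce W').IsAcyclic := by
  intro v c hc
  let φ : G.induce W' →g G.induce W :=
    ⟨fun x => ⟨x.1, h x.2⟩, fun {a b} hab => hab⟩
  have hinj : Function.Injective φ := by
    intro a b hab
    have h2 : (φ a).val = (φ b).val := congrArg Subtype.val hab
    exact Subtype.ext h2
  exact hac (c.map φ) (hc.map hinj)

lemma exists_leaf {W : Set V} (hW : W.Nonempty) (hac : (G.induce W).IsAcyclic)
    (hiso : ∀ v ∈ W, (G.neighborSet v ∩ W).Nonempty) :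
    ∃ u ∈ W, ∃ p, G.neighborSet u ∩ W = {p} := by
  classical
  set Γ := G.induce W with hΓ
  set Lens : Set ℕ :=
    {n | ∃ (a b : W) (p : Γ.Walk a b), p.IsPath ∧ p.length = n} with hLens
  obtain ⟨a₀, ha₀⟩ := hW
  have hne : Lens.Nonempty := ⟨0, ⟨a₀, ha₀⟩, ⟨a₀, ha₀⟩, Walk.nil, Walk.IsPath.nil, rfl⟩
  have hbdd : BddAbove Lens := by
    refine ⟨Fintype.card W, ?_⟩
    rintro n ⟨a, b, p, hp, rfl⟩
    exact le_of_lt hp.length_lt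
  have hmem := Nat.sSup_mem hne hbdd
  set n := sSup Lens with hn
  obtain ⟨a, b, p, hp, hlen⟩ := hmem
  cases p with
  | nil =>
    -- extend using a neighbor of a
    obtain ⟨z, hz⟩ := hiso a a.2
    have hzadj : Γ.Adj a ⟨z, hz.2⟩ := hz.1
    have : (Walk.cons hzadj.symm Walk.nil).length ∈ Lens := by
      refine ⟨⟨z, hz.2⟩, a, _, ?_, rfl⟩
      simp [Walk.isPath_def]
      intro h
      exact (G.ne_of_adj hz.1).symm (congrArg Subtype.val h)
    have hle := le_csSup hbdd this
    simp [← hn, ← hlen] at hle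
  | @cons _ a' _ hadj q =>
    -- claim: the neighbors of a in W are exactly {a'}
    refine ⟨a, a.2, a', ?_⟩
    have hqpath : q.IsPath := hp.of_cons
    have hasup : (a : W) ∉ q.support := (Walk.cons_isPath_iff _ _ |>.mp hp).2
    ext z
    constructor
    · rintro ⟨hzN, hzW⟩
      by_contra hza'
      have hza : z ≠ ↑a := (G.ne_of_adj hzN).symm
      have hza'' : z ≠ ↑a' := fun h => hza' (by simp [h])
      set z' : W := ⟨z, hzW⟩ with hz'
      have hadjz : Γ.Adj a z' := hzN
      have hz'a : z' ≠ a := fun h => hza (congrArg Subtype.val h)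
      have hz'a' : z' ≠ a' := fun h => hza'' (congrArg Subtype.val h)
      by_cases hsup : z' ∈ q.support
      · -- build a cycle
        set r := q.takeUntil z' hsup with hr
        have hrpath : r.IsPath := hqpath.takeUntil hsup
        have harsup : (a : W) ∉ r.support := fun h => hasup (q.support_takeUntil_subset hsup h)
        have hcyc : (Walk.cons hadjz.symm (Walk.cons hadj r)).IsCycle := by
          rw [Walk.cons_isCycle_iff]
          constructor
          · rw [Walk.cons_isPath_iff]
            exact ⟨hrpath, harsup⟩
          · intro hmem
            rw [Walk.edges_cons] at hmem
            rcases List.mem_cons.mp hmem with h | h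
            · rw [Sym2.eq_iff] at h
              rcases h with ⟨h1, h2⟩ | ⟨h1, h2⟩
              · exact hz'a h1
              · exact hz'a' h1
            · exact harsup (r.snd_mem_support_of_mem_edges h)
        exact hac _ hcyc
      · -- extend the path
        have hsup' : z' ∉ (Walk.cons hadj q).support := by
          rw [Walk.support_cons]
          intro h
          rcases List.mem_cons.mp h with h | h
          · exact hz'a h
          · exact hsup h
        have : (Walk.cons hadjz.symm (Walk.cons hadj q)).length ∈ Lens := by
          refine ⟨z', b, _, ?_, rfl⟩
          rw [Walk.cons_isPath_iff]
          exact ⟨hp, hsup'⟩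
        have hle := le_csSup hbdd this
        rw [← hn] at hle
        simp only [Walk.length_cons] at hle hlen
        omega
    · rintro rfl
      have : Γ.Adj a a' := hadj
      exact ⟨this, a'.2⟩

end GraphAux


section CC
variable {V : Type*} [Fintype V] [DecidableEq V] (G : SimpleGraph V)

private lemma walk_const {α : Type*} {H : SimpleGraph α} {β : Sort*} (f : α → β)
    (h : ∀ v w, H.Adj v w → f v = f w) {v w : α} (q : H.Walk v w) : f v = f w := by
  induction q with
  | nil => rfl
  | cons ha _ ih => exact (h _ _ ha).trans ih

/-- Removing a leaf `u` (with unique neighbor `p` in `W`) does not change the number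
of connected components. -/
lemma cc_card_erase_leaf {W : Set V} {u p : V} (hu : u ∈ W)
    (hN : G.neighborSet u ∩ W = {p}) :
    Nat.card (G.induce (W \ {u})).ConnectedComponent
      = Nat.card (G.induce W).ConnectedComponent := by
  classical
  have hpN : p ∈ G.neighborSet u ∩ W := hN ▸ rfl
  have hadj : G.Adj u p := hpN.1
  have hpW : p ∈ W := hpN.2
  have hpu : p ≠ u := (G.ne_of_adj hadj).symm
  have hpW' : p ∈ W \ {u} := ⟨hpW, hpu⟩
  let φ : G.induce (W \ {u}) →g G.induce W := ⟨fun x => ⟨x.1, x.2.1⟩, fun {a b} hab => hab⟩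
  let f : ↥W → (G.induce (W \ {u})).ConnectedComponent := fun v =>
    if h : (v : V) = u then (G.induce (W \ {u})).connectedComponentMk ⟨p, hpW'⟩
    else (G.induce (W \ {u})).connectedComponentMk ⟨v.1, v.2, h⟩
  have hf : ∀ v w : ↥W, (G.induce W).Adj v w → f v = f w := by
    rintro ⟨v, hv⟩ ⟨w, hw⟩ hvw
    have hGvw : G.Adj v w := hvw
    by_cases hvu : v = u
    · subst hvu
      have : w ∈ G.neighborSet v ∩ W := ⟨hGvw, hw⟩
      rw [hN] at this
      simp only [f, dif_pos rfl, dif_neg (this ▸ hpu : w ≠ v)]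
      congr 1
      exact Subtype.ext this.symm
    · by_cases hwu : w = u
      · subst hwu
        have : v ∈ G.neighborSet w ∩ W := ⟨hGvw.symm, hv⟩
        rw [hN] at this
        simp only [f, dif_neg hvu, dif_pos rfl]
        congr 1
        exact Subtype.ext this
      · simp only [f, dif_neg hvu, dif_neg hwu]
        exact ConnectedComponent.connectedComponentMk_eq_of_adj hGvw
  refine Nat.card_congr
    ⟨ConnectedComponent.map φ, ConnectedComponent.lift f (fun v w q _ => walk_const f hf q),
      ?_, ?_⟩
  · intro C
    refine ConnectedComponent.ind (fun x => ?_) C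
    simp only [ConnectedComponent.map_mk, ConnectedComponent.lift_mk, f]
    split_ifs with h
    · exact absurd h x.2.2
    · rfl
  · intro C
    refine ConnectedComponent.ind (fun v => ?_) C
    simp only [ConnectedComponent.map_mk, ConnectedComponent.lift_mk, f]
    split_ifs with hvu
    · simp only [ConnectedComponent.map_mk]
      apply ConnectedComponent.sound
      have h2 : (G.induce W).Adj ⟨p, hpW⟩ v := by
        show G.Adj p (v : V)
        rw [hvu]
        exact hadj.symm
      exact h2.reachable
    · rfl

/-- Removing a two-vertex component `{u, p}` decreases the component count by one. -/
lemma cc_card_erase_pair {W : Set V} {u p : V} (hu : u ∈ W) (hpW : p ∈ W)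
    (hNu : G.neighborSet u ∩ W = {p}) (hNp : G.neighborSet p ∩ W = {u}) :
    Nat.card (G.induce W).ConnectedComponent
      = Nat.card (G.induce (W \ {u, p})).ConnectedComponent + 1 := by
  classical
  have hadj : G.Adj u p := (hNu ▸ rfl : p ∈ G.neighborSet u ∩ W).1
  have hpu : p ≠ u := (G.ne_of_adj hadj).symm
  let W' := W \ {u, p}
  let φ : G.induce W' →g G.induce W := ⟨fun x => ⟨x.1, x.2.1⟩, fun {a b} hab => hab⟩
  let f : ↥W → Option (G.induce W').ConnectedComponent := fun v =>
    if h : (v : V) = u ∨ (v : V) = p then none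
    else some ((G.induce W').connectedComponentMk ⟨v.1, v.2, h⟩)
  have hf : ∀ v w : ↥W, (G.induce W).Adj v w → f v = f w := by
    rintro ⟨v, hv⟩ ⟨w, hw⟩ hvw
    have hGvw : G.Adj v w := hvw
    by_cases hvup : v = u ∨ v = p
    · have hwup : w = u ∨ w = p := by
        rcases hvup with rfl | rfl
        · right
          have : w ∈ G.neighborSet v ∩ W := ⟨hGvw, hw⟩
          rw [hNu] at this; exact this
        · left
          have : w ∈ G.neighborSet v ∩ W := ⟨hGvw, hw⟩
          rw [hNp] at this; exact this
      simp only [f, dif_pos hvup, dif_pos hwup]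
    · have hwup : ¬(w = u ∨ w = p) := by
        rintro (rfl | rfl)
        · have : v ∈ G.neighborSet w ∩ W := ⟨hGvw.symm, hv⟩
          rw [hNu] at this; exact hvup (Or.inr this)
        · have : v ∈ G.neighborSet w ∩ W := ⟨hGvw.symm, hv⟩
          rw [hNp] at this; exact hvup (Or.inl this)
      simp only [f, dif_neg hvup, dif_neg hwup, Option.some_inj]
      exact ConnectedComponent.connectedComponentMk_eq_of_adj hGvw
  have e : (G.induce W).ConnectedComponent ≃ Option ((G.induce W').ConnectedComponent) := by
    refine ⟨ConnectedComponent.lift f (fun v w q _ => walk_const f hf q),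
      fun o => o.elim ((G.induce W).connectedComponentMk ⟨u, hu⟩)
        (ConnectedComponent.map φ), ?_, ?_⟩
    · intro C
      refine ConnectedComponent.ind (fun v => ?_) C
      simp only [ConnectedComponent.lift_mk, f]
      split_ifs with hvup
      · simp only [Option.elim]
        rcases hvup with h | h
        · exact congrArg _ (Subtype.ext h.symm)
        · apply ConnectedComponent.sound
          have h2 : (G.induce W).Adj ⟨u, hu⟩ v := by
            show G.Adj u (v : V)
            rw [h]; exact hadj
          exact h2.reachable
      · simp only [Option.elim, ConnectedComponent.map_mk]
        rfl
    · intro o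
      rcases o with _ | C
      · simp only [Option.elim, ConnectedComponent.lift_mk, f]
        split_ifs with h
        · rfl
        · exact absurd (Or.inl trivial) h
      · refine ConnectedComponent.ind (fun x => ?_) C
        simp only [Option.elim, ConnectedComponent.map_mk, ConnectedComponent.lift_mk, f]
        split_ifs with h
        · exact absurd h x.2.2
        · rfl
  haveI : Finite ((G.induce W').ConnectedComponent) := Quot.finite _
  rw [Nat.card_congr e, Finite.card_option]

end CC

/-- The combinatorial dimension of `S`. -/
noncomputable def cdim {V : Type*} {F : V → Type*} (S : Set (∀ v, F v)) : ℕ :=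
  sInf {n : ℕ | ∃ A : Set V, A.ncard = n ∧ ∃ d : ℕ, Determines S A Set.univ d}


/-- Forest Bound for network dynamics: let `ω ∈ ℝ^V` and for each edge `e` of `G`
let `f e : ℝ → ℝ` be an odd function all of whose fibers have at most `d`
elements.  Then the set `X` of equilibria of the network dynamical system
`ẋ_v = ω_v + ∑_{w ∈ N(v)} f {w,v} (x_w - x_v)` is `d`-compatible with `G`, and
for every induced forest `W` of `G` without isolated vertices, with `l` leaves
and `c` components, `cdim X ≤ |V| - |W| + l - c`. -/
theorem network_dynamics_forest_bound {V : Type*} [Fintype V] [DecidableEq V]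
    (G : SimpleGraph V) [DecidableRel G.Adj]
    (ω : V → ℝ) (d : ℕ) (f : Sym2 V → ℝ → ℝ)
    (hodd : ∀ e ∈ G.edgeSet, ∀ y : ℝ, f e (-y) = - f e y)
    (hfib : ∀ e ∈ G.edgeSet, ∀ y : ℝ, {z : ℝ | f e z = y}.encard ≤ (d : ℕ∞))
    (X : Set (V → ℝ))
    (hX : X = {x : V → ℝ | ∀ v : V,
      ω v + ∑ w ∈ G.neighborFinset v, f s(w, v) (x w - x v) = 0}) :
    Compatible X G d ∧
      ∀ (W : Set V), (G.induce W).IsAcyclic →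
        (∀ v ∈ W, (G.neighborSet v ∩ W).Nonempty) →
        ∀ l c : ℕ,
          l = {v | v ∈ W ∧ (G.neighborSet v ∩ W).ncard = 1}.ncard →
          c = Nat.card (G.induce W).ConnectedComponent →
          (cdim X : ℤ) ≤ (Fintype.card V : ℤ) - W.ncard + l - c := by
  classical
  subst hX
  set X : Set (V → ℝ) := {x : V → ℝ | ∀ v : V,
      ω v + ∑ w ∈ G.neighborFinset v, f s(w, v) (x w - x v) = 0} with hX
  -- Part 1 : compatibility
  have hcomp0 : ∀ (v w : V), G.Adj v w → ∀ (A : Set V),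
      A = (insert v (G.neighborSet v)) \ ({w} : Set V) → Determines X A {w} d := by
    intro v w hvw A hA
    intro c
    have hvA : v ∈ A := by rw [hA]; exact ⟨Set.mem_insert _ _, by simp [hvw.ne]⟩
    set g : V → ℝ := fun z => if h : z ∈ A then c ⟨z, h⟩ else 0 with hg
    set t : ℝ := -(ω v + ∑ u ∈ (G.neighborFinset v).erase w, f s(u, v) (g u - g v)) with ht
    set ψ : (∀ b : ({w} : Set V), ℝ) → ℝ := fun y => y ⟨w, rfl⟩ - g v with hψ
    have hinj : Function.Injective ψ := by
      intro y₁ y₂ h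
      have h2 : y₁ ⟨w, rfl⟩ = y₂ ⟨w, rfl⟩ := by
        have h3 := congrArg (· + g v) h
        simpa [ψ] using h3
      funext b
      rcases b with ⟨b, hb⟩
      have hb' : b = w := hb
      subst hb'
      exact h2
    have hsub : ψ '' ((fun x : V → ℝ => fun b : ({w} : Set V) => x b) ''
        {x ∈ X | ∀ a : A, x a = c a}) ⊆ {z : ℝ | f s(w, v) z = t} := by
      rintro _ ⟨_, ⟨x, ⟨hxX, hxc⟩, rfl⟩, rfl⟩
      show f s(w, v) (x w - g v) = t
      have hxgA : ∀ z (hz : z ∈ A), x z = g z := by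
        intro z hz
        rw [hg]
        simp only [dif_pos hz]
        exact hxc ⟨z, hz⟩
      have hxv : x v = g v := hxgA v hvA
      have heq := hxX v
      have hwmem : w ∈ G.neighborFinset v := by
        rw [SimpleGraph.mem_neighborFinset]; exact hvw
      have hsplit := Finset.add_sum_erase (G.neighborFinset v)
        (fun u => f s(u, v) (x u - x v)) hwmem
      have hsum : ∑ u ∈ (G.neighborFinset v).erase w, f s(u, v) (x u - x v)
          = ∑ u ∈ (G.neighborFinset v).erase w, f s(u, v) (g u - g v) := by
        refine Finset.sum_congr rfl fun u hu => ?_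
        obtain ⟨hune, huN⟩ := Finset.mem_erase.mp hu
        have huN' : u ∈ G.neighborSet v := by
          rwa [SimpleGraph.mem_neighborFinset] at huN
        have huA : u ∈ A := by rw [hA]; exact ⟨Set.mem_insert_of_mem _ huN', hune⟩
        rw [hxgA u huA, hxv]
      have hfinal : f s(w, v) (x w - x v) = t := by
        rw [ht]
        have h1 : f s(w, v) (x w - x v)
            + ∑ u ∈ (G.neighborFinset v).erase w, f s(u, v) (x u - x v)
            = ∑ u ∈ G.neighborFinset v, f s(u, v) (x u - x v) := hsplit
        rw [hsum] at h1
        linarith [heq, h1]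
      rw [← hxv]
      exact hfinal
    calc ((fun x : V → ℝ => fun b : ({w} : Set V) => x b) ''
          {x ∈ X | ∀ a : A, x a = c a}).encard
        = (ψ '' ((fun x : V → ℝ => fun b : ({w} : Set V) => x b) ''
          {x ∈ X | ∀ a : A, x a = c a})).encard := (hinj.injOn.encard_image).symm
      _ ≤ ({z : ℝ | f s(w, v) z = t}).encard := Set.encard_mono hsub
      _ ≤ (d : ℕ∞) := hfib s(w, v) (G.mem_edgeSet.mpr hvw.symm) t
  have hcomp : Compatible X G d := fun v w hvw => hcomp0 v w hvw _ rfl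
  refine ⟨hcomp, ?_⟩
  -- determination machinery
  have det_univ : ∃ d' : ℕ, Determines X (Set.univ : Set V) Set.univ d' := by
    refine ⟨1, fun c => ?_⟩
    have : ∀ a ∈ ((fun x : V → ℝ => fun b : (Set.univ : Set V) => x b) ''
        {x ∈ X | ∀ a : (Set.univ : Set V), x a = c a}),
        ∀ b ∈ ((fun x : V → ℝ => fun b : (Set.univ : Set V) => x b) ''
        {x ∈ X | ∀ a : (Set.univ : Set V), x a = c a}), a = b := by
      rintro _ ⟨x, ⟨_, hx⟩, rfl⟩ _ ⟨y, ⟨_, hy⟩, rfl⟩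
      funext b
      show x ↑b = y ↑b
      rw [hx b, hy b]
    calc _ ≤ (1 : ℕ∞) := Set.encard_le_one_iff.mpr (fun a b ha hb => this a ha b hb)
      _ = ((1 : ℕ) : ℕ∞) := by norm_num
  have back : ∀ (A : Set V) (w v : V), G.Adj v w →
      (insert v (G.neighborSet v)) \ {w} ⊆ A →
      (∃ d' : ℕ, Determines X (insert w A) Set.univ d') →
      (∃ d' : ℕ, Determines X A Set.univ d') := by
    rintro A w v hadj hsubA ⟨d', hd'⟩
    exact ⟨d * d', det_trans (det_insert (det_mono hsubA (hcomp v w hadj))) hd'⟩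
  -- main induction
  have key : ∀ n (W : Set V), W.ncard = n → (G.induce W).IsAcyclic →
      (∀ v ∈ W, (G.neighborSet v ∩ W).Nonempty) → ∀ t : V,
      ∃ S : Set V, S ⊆ {v | v ∈ W ∧ (G.neighborSet v ∩ W).ncard = 1} ∧
        (t ∈ {v | v ∈ W ∧ (G.neighborSet v ∩ W).ncard = 1} → t ∈ S) ∧
        S.ncard + Nat.card (G.induce W).ConnectedComponent
          = {v | v ∈ W ∧ (G.neighborSet v ∩ W).ncard = 1}.ncard ∧
        (∃ d' : ℕ, Determines X (Wᶜ ∪ S) Set.univ d') := by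
    intro n
    induction n using Nat.strong_induction_on with
    | _ n ih =>
    intro W hn hac hiso t
    rcases W.eq_empty_or_nonempty with rfl | hWne
    · haveI : IsEmpty ((G.induce (∅ : Set V)).ConnectedComponent) :=
        SimpleGraph.ConnectedComponent.isEmpty
      refine ⟨∅, by simp, by simp, by simp [Nat.card_of_isEmpty], ?_⟩
      simpa using det_univ
    · -- choose the leaf u (equal to t if t is a leaf)
      set Lv := {v | v ∈ W ∧ (G.neighborSet v ∩ W).ncard = 1} with hLvdef
      obtain ⟨u, huLv, hut, p, hNu⟩ :
          ∃ u, u ∈ Lv ∧ (t ∈ Lv → u = t) ∧ ∃ p, G.neighborSet u ∩ W = {p} := by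
        by_cases htL : t ∈ Lv
        · obtain ⟨p, hp⟩ := Set.ncard_eq_one.mp htL.2
          exact ⟨t, htL, fun _ => rfl, p, hp⟩
        · obtain ⟨u₀, hu₀W, p₀, hp₀⟩ := exists_leaf G hWne hac hiso
          exact ⟨u₀, ⟨hu₀W, by rw [hp₀]; exact Set.ncard_singleton _⟩,
            fun h => absurd h htL, p₀, hp₀⟩
      have huW : u ∈ W := huLv.1
      have hpNu : p ∈ G.neighborSet u ∩ W := hNu ▸ rfl
      have hadj_up : G.Adj u p := hpNu.1
      have hpW : p ∈ W := hpNu.2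
      have hupne : u ≠ p := G.ne_of_adj hadj_up
      have huniq : ∀ z ∈ W, G.Adj u z → z = p := by
        intro z hzW hadj
        have hz : z ∈ G.neighborSet u ∩ W := ⟨hadj, hzW⟩
        rw [hNu] at hz
        exact hz
      have hupmem : u ∈ G.neighborSet p ∩ W := ⟨hadj_up.symm, huW⟩
      set k := (G.neighborSet p ∩ W).ncard with hk
      have hk1 : 1 ≤ k := by
        rw [hk]
        exact (Set.ncard_pos (Set.toFinite _)).mpr ⟨u, hupmem⟩
      have hnpos : 0 < n := by
        rw [← hn]
        exact (Set.ncard_pos (Set.toFinite _)).mpr hWne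
      by_cases hk1' : k = 1
      · -- CASE: p also has degree 1; remove the component {u, p}
        have hNp : G.neighborSet p ∩ W = {u} := by
          obtain ⟨x, hx⟩ := Set.ncard_eq_one.mp hk1'
          have hux : u = x := by rw [hx] at hupmem; exact hupmem
          rw [hx, ← hux]
        set W' := W \ ({u, p} : Set V) with hW'def
        have hsubW' : W' ⊆ W := Set.diff_subset
        have hW'lt : W'.ncard < n := by
          rw [← hn]
          exact Set.ncard_lt_ncard ⟨hsubW', fun hWsub =>
            (hWsub huW).2 (Set.mem_insert _ _)⟩ (Set.toFinite _)
        have hac' := induce_acyclic_mono G hsubW' hac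
        have hsame : ∀ v ∈ W', G.neighborSet v ∩ W' = G.neighborSet v ∩ W := by
          intro v hv
          have hvup : v ≠ u ∧ v ≠ p := by
            have := hv.2
            simp only [Set.mem_insert_iff, Set.mem_singleton_iff] at this
            exact ⟨fun h => this (Or.inl h), fun h => this (Or.inr h)⟩
          ext z
          constructor
          · rintro ⟨hz1, hz2⟩; exact ⟨hz1, hz2.1⟩
          · rintro ⟨hz1, hz2⟩
            refine ⟨hz1, hz2, ?_⟩
            simp only [Set.mem_insert_iff, Set.mem_singleton_iff]
            rintro (rfl | rfl)
            · exact hvup.2 (huniq v hv.1 hz1.symm)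
            · have : v ∈ G.neighborSet z ∩ W := ⟨hz1.symm, hv.1⟩
              rw [hNp] at this
              exact hvup.1 this
        have hiso' : ∀ v ∈ W', (G.neighborSet v ∩ W').Nonempty := by
          intro v hv
          rw [hsame v hv]
          exact hiso v hv.1
        have hLv' : {v | v ∈ W' ∧ (G.neighborSet v ∩ W').ncard = 1} = Lv \ {u, p} := by
          ext v
          constructor
          · rintro ⟨hvW', hvcard⟩
            rw [hsame v hvW'] at hvcard
            exact ⟨⟨hvW'.1, hvcard⟩, hvW'.2⟩
          · rintro ⟨⟨hvW, hvcard⟩, hvup⟩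
            have hvW' : v ∈ W' := ⟨hvW, hvup⟩
            exact ⟨hvW', by rw [hsame v hvW']; exact hvcard⟩
        have hLsub : ({u, p} : Set V) ⊆ Lv := by
          rintro z (rfl | hz)
          · exact huLv
          · rw [Set.mem_singleton_iff] at hz
            subst hz
            exact ⟨hpW, by rw [← hk] at *; exact hk1'⟩
        have hLv2 : 2 ≤ Lv.ncard := by
          have := Set.ncard_le_ncard hLsub (Set.toFinite _)
          rwa [Set.ncard_pair hupne] at this
        have hLv'card : (Lv \ ({u, p} : Set V)).ncard = Lv.ncard - 2 := by
          rw [Set.ncard_diff hLsub, Set.ncard_pair hupne]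
        have hcc : Nat.card (G.induce W).ConnectedComponent
            = Nat.card (G.induce W').ConnectedComponent + 1 :=
          cc_card_erase_pair G huW hpW hNu hNp
        obtain ⟨S', hS'sub, hS't, hS'count, hS'det⟩ := ih W'.ncard hW'lt W' rfl hac' hiso' t
        have hS'W' : S' ⊆ W' := hS'sub.trans (fun v hv => hv.1)
        have huS' : u ∉ S' := fun h => (hS'W' h).2 (Set.mem_insert _ _)
        have hpS' : p ∉ S' := fun h => (hS'W' h).2 (by simp)
        refine ⟨insert u S', ?_, ?_, ?_, ?_⟩
        · refine Set.insert_subset huLv ?_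
          rw [hLv'] at hS'sub
          exact hS'sub.trans Set.diff_subset
        · intro htLv
          rw [← hut htLv]
          exact Set.mem_insert _ _
        · rw [Set.ncard_insert_of_notMem huS' (Set.toFinite _)]
          rw [hLv'] at hS'count
          rw [hLv'card] at hS'count
          omega
        · refine back (Wᶜ ∪ insert u S') p u hadj_up ?_ ?_
          · rintro z ⟨hz, hzp⟩
            rw [Set.mem_singleton_iff] at hzp
            rcases hz with rfl | hz
            · exact Or.inr (Set.mem_insert _ _)
            · by_cases hzW : z ∈ W
              · exact absurd (huniq z hzW hz) hzp
              · exact Or.inl hzW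
          · have hset : insert p (Wᶜ ∪ insert u S') = W'ᶜ ∪ S' := by
              ext z
              simp only [Set.mem_insert_iff, Set.mem_union, Set.mem_compl_iff, hW'def,
                Set.mem_diff, Set.mem_singleton_iff, not_and, not_not]
              constructor
              · rintro (rfl | h | rfl | h)
                · exact Or.inl (fun _ => Or.inr rfl)
                · exact Or.inl (fun hzW => absurd hzW h)
                · exact Or.inl (fun _ => Or.inl rfl)
                · exact Or.inr h
              · rintro (h | h)
                · by_cases hzW : z ∈ W
                  · rcases h hzW with rfl | rfl
                    · exact Or.inr (Or.inr (Or.inl rfl))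
                    · exact Or.inl rfl
                  · exact Or.inr (Or.inl hzW)
                · exact Or.inr (Or.inr (Or.inr h))
            rw [hset]
            exact hS'det
      · -- CASE: p has degree ≥ 2; remove just the leaf u
        have hk2 : 2 ≤ k := by omega
        set W' := W \ ({u} : Set V) with hW'def
        have hsubW' : W' ⊆ W := Set.diff_subset
        have hW'lt : W'.ncard < n := by
          rw [← hn]
          exact Set.ncard_lt_ncard ⟨hsubW', fun hWsub => (hWsub huW).2 rfl⟩ (Set.toFinite _)
        have hac' := induce_acyclic_mono G hsubW' hac
        have hpW' : p ∈ W' := ⟨hpW, fun h => hupne (Set.mem_singleton_iff.mp h).symm⟩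
        have hsame : ∀ v ∈ W', v ≠ p → G.neighborSet v ∩ W' = G.neighborSet v ∩ W := by
          intro v hv hvp
          ext z
          constructor
          · rintro ⟨hz1, hz2⟩; exact ⟨hz1, hz2.1⟩
          · rintro ⟨hz1, hz2⟩
            refine ⟨hz1, hz2, ?_⟩
            rw [Set.mem_singleton_iff]
            rintro rfl
            exact hvp (huniq v hv.1 hz1.symm)
        have hNp' : G.neighborSet p ∩ W' = (G.neighborSet p ∩ W) \ {u} := by
          ext z
          constructor
          · rintro ⟨hz1, hz2, hz3⟩; exact ⟨⟨hz1, hz2⟩, hz3⟩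
          · rintro ⟨⟨hz1, hz2⟩, hz3⟩; exact ⟨hz1, hz2, hz3⟩
        have hNp'card : (G.neighborSet p ∩ W').ncard = k - 1 := by
          rw [hNp', Set.ncard_diff_singleton_of_mem hupmem]
        have hiso' : ∀ v ∈ W', (G.neighborSet v ∩ W').Nonempty := by
          intro v hv
          by_cases hvp : v = p
          · rw [hvp]
            have hpos : 0 < (G.neighborSet p ∩ W').ncard := by rw [hNp'card]; omega
            exact (Set.ncard_pos (Set.toFinite _)).mp hpos
          · rw [hsame v hv hvp]
            exact hiso v hv.1
        have hcc : Nat.card (G.induce W').ConnectedComponent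
            = Nat.card (G.induce W).ConnectedComponent :=
          cc_card_erase_leaf G huW hNu
        by_cases hk2' : k = 2
        · -- SUBCASE: p has degree exactly 2; it becomes a leaf of W'
          have hpLv' : p ∈ {v | v ∈ W' ∧ (G.neighborSet v ∩ W').ncard = 1} :=
            ⟨hpW', by rw [hNp'card]; omega⟩
          have hpnotLv : p ∉ Lv := fun h => by
            have := h.2; rw [← hk] at this; omega
          have hLv'eq : {v | v ∈ W' ∧ (G.neighborSet v ∩ W').ncard = 1}
              = insert p (Lv \ {u}) := by
            ext v
            constructor
            · rintro ⟨hvW', hvcard⟩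
              by_cases hvp : v = p
              · exact Or.inl hvp
              · rw [hsame v hvW' hvp] at hvcard
                exact Or.inr ⟨⟨hvW'.1, hvcard⟩, hvW'.2⟩
            · rintro (rfl | ⟨⟨hvW, hvcard⟩, hvu⟩)
              · exact hpLv'
              · have hvW' : v ∈ W' := ⟨hvW, hvu⟩
                have hvp : v ≠ p := fun h => hpnotLv (h ▸ ⟨hvW, hvcard⟩)
                exact ⟨hvW', by rw [hsame v hvW' hvp]; exact hvcard⟩
          have hLv'card : {v | v ∈ W' ∧ (G.neighborSet v ∩ W').ncard = 1}.ncard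
              = Lv.ncard := by
            rw [hLv'eq, Set.ncard_insert_of_notMem
              (fun h => hpnotLv (Set.diff_subset h)) (Set.toFinite _),
              Set.ncard_diff_singleton_of_mem huLv]
            have : 1 ≤ Lv.ncard :=
              (Set.ncard_pos (Set.toFinite _)).mpr ⟨u, huLv⟩
            omega
          obtain ⟨S', hS'sub, hS't, hS'count, hS'det⟩ := ih W'.ncard hW'lt W' rfl hac' hiso' p
          have hS'W' : S' ⊆ W' := hS'sub.trans (fun v hv => hv.1)
          have huS' : u ∉ S' := fun h => (hS'W' h).2 rfl
          have hpS' : p ∈ S' := hS't hpLv'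
          refine ⟨insert u (S' \ {p}), ?_, ?_, ?_, ?_⟩
          · refine Set.insert_subset huLv ?_
            intro z hz
            have := hS'sub hz.1
            rw [hLv'eq] at this
            rcases this with rfl | h
            · exact absurd rfl hz.2
            · exact h.1
          · intro htLv
            rw [← hut htLv]
            exact Set.mem_insert _ _
          · rw [Set.ncard_insert_of_notMem (fun h => huS' h.1) (Set.toFinite _),
              Set.ncard_diff_singleton_of_mem hpS']
            rw [hLv'card] at hS'count
            have hS'pos : 1 ≤ S'.ncard :=
              (Set.ncard_pos (Set.toFinite _)).mpr ⟨p, hpS'⟩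
            rw [hcc] at hS'count
            omega
          · refine back (Wᶜ ∪ insert u (S' \ {p})) p u hadj_up ?_ ?_
            · rintro z ⟨hz, hzp⟩
              rw [Set.mem_singleton_iff] at hzp
              rcases hz with rfl | hz
              · exact Or.inr (Set.mem_insert _ _)
              · by_cases hzW : z ∈ W
                · exact absurd (huniq z hzW hz) hzp
                · exact Or.inl hzW
            · have hset : insert p (Wᶜ ∪ insert u (S' \ {p})) = W'ᶜ ∪ S' := by
                ext z
                simp only [Set.mem_insert_iff, Set.mem_union, Set.mem_compl_iff, hW'def,
                  Set.mem_diff, Set.mem_singleton_iff, not_and, not_not]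
                constructor
                · rintro (rfl | h | rfl | h)
                  · exact Or.inr hpS'
                  · exact Or.inl (fun hzW => absurd hzW h)
                  · exact Or.inl (fun _ => rfl)
                  · exact Or.inr h.1
                · rintro (h | h)
                  · by_cases hzW : z ∈ W
                    · exact Or.inr (Or.inr (Or.inl (h hzW)))
                    · exact Or.inr (Or.inl hzW)
                  · by_cases hzp : z = p
                    · exact Or.inl hzp
                    · exact Or.inr (Or.inr (Or.inr ⟨h, hzp⟩))
              rw [hset]
              exact hS'det
        · -- SUBCASE: p has degree ≥ 3
          have hk3 : 3 ≤ k := by omega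
          have hLv'eq : {v | v ∈ W' ∧ (G.neighborSet v ∩ W').ncard = 1} = Lv \ {u} := by
            ext v
            constructor
            · rintro ⟨hvW', hvcard⟩
              by_cases hvp : v = p
              · subst hvp
                rw [hNp'card] at hvcard
                omega
              · rw [hsame v hvW' hvp] at hvcard
                exact ⟨⟨hvW'.1, hvcard⟩, hvW'.2⟩
            · rintro ⟨⟨hvW, hvcard⟩, hvu⟩
              have hvW' : v ∈ W' := ⟨hvW, hvu⟩
              have hvp : v ≠ p := by
                rintro rfl
                rw [← hk] at hvcard
                omega
              exact ⟨hvW', by rw [hsame v hvW' hvp]; exact hvcard⟩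
          have hLv1 : 1 ≤ Lv.ncard :=
            (Set.ncard_pos (Set.toFinite _)).mpr ⟨u, huLv⟩
          have hLv'card : {v | v ∈ W' ∧ (G.neighborSet v ∩ W').ncard = 1}.ncard
              = Lv.ncard - 1 := by
            rw [hLv'eq, Set.ncard_diff_singleton_of_mem huLv]
          obtain ⟨S', hS'sub, hS't, hS'count, hS'det⟩ := ih W'.ncard hW'lt W' rfl hac' hiso' t
          have hS'W' : S' ⊆ W' := hS'sub.trans (fun v hv => hv.1)
          have huS' : u ∉ S' := fun h => (hS'W' h).2 rfl
          refine ⟨insert u S', ?_, ?_, ?_, ?_⟩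
          · refine Set.insert_subset huLv ?_
            rw [hLv'eq] at hS'sub
            exact hS'sub.trans Set.diff_subset
          · intro htLv
            rw [← hut htLv]
            exact Set.mem_insert _ _
          · rw [Set.ncard_insert_of_notMem huS' (Set.toFinite _)]
            rw [hLv'card, hcc] at hS'count
            omega
          · have hset : Wᶜ ∪ insert u S' = W'ᶜ ∪ S' := by
              ext z
              simp only [Set.mem_insert_iff, Set.mem_union, Set.mem_compl_iff, hW'def,
                Set.mem_diff, Set.mem_singleton_iff, not_and, not_not]
              constructor
              · rintro (h | rfl | h)
                · exact Or.inl (fun hzW => absurd hzW h)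
                · exact Or.inl (fun _ => rfl)
                · exact Or.inr h
              · rintro (h | h)
                · by_cases hzW : z ∈ W
                  · exact Or.inr (Or.inl (h hzW))
                  · exact Or.inl hzW
                · exact Or.inr (Or.inr h)
            rw [hset]
            exact hS'det
  -- final assembly
  intro W hac hiso l c hl hc
  rcases W.eq_empty_or_nonempty with rfl | hWne
  · haveI : IsEmpty ((G.induce (∅ : Set V)).ConnectedComponent) :=
      SimpleGraph.ConnectedComponent.isEmpty
    have hc0 : c = 0 := by rw [hc, Nat.card_of_isEmpty]
    have hl0 : l = 0 := by
      rw [hl]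
      simp
    obtain ⟨d', hd'⟩ := det_univ
    have hcd : cdim X ≤ (Set.univ : Set V).ncard := Nat.sInf_le ⟨Set.univ, rfl, d', hd'⟩
    rw [Set.ncard_univ, Nat.card_eq_fintype_card] at hcd
    have h0 : (∅ : Set V).ncard = 0 := Set.ncard_empty V
    rw [hc0, hl0, h0]
    push_cast
    omega
  · obtain ⟨S, hSsub, -, hScount, d', hdet⟩ :=
      key W.ncard W rfl hac hiso hWne.some
    have hSW : S ⊆ W := hSsub.trans (fun v hv => hv.1)
    have hdisj : Disjoint Wᶜ S := by
      rw [Set.disjoint_right]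
      intro z hz
      simp only [Set.mem_compl_iff, not_not]
      exact hSW hz
    have hAncard : (Wᶜ ∪ S).ncard = Wᶜ.ncard + S.ncard := Set.ncard_union_eq hdisj
    have hWc : W.ncard + Wᶜ.ncard = Fintype.card V := by
      rw [Set.ncard_add_ncard_compl, Nat.card_eq_fintype_card]
    have hcd : cdim X ≤ (Wᶜ ∪ S).ncard := Nat.sInf_le ⟨Wᶜ ∪ S, rfl, d', hdet⟩
    rw [hAncard] at hcd
    have hsc : S.ncard + c = l := by rw [hl, hc]; exact hScount
    have hWle : W.ncard ≤ Fintype.card V := by omega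
    push_cast
    omega
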